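/- Let h ∈ H¹(ℝ²) have atomic decomposition h = Σ_j λ_j b_j, where b_j is an atom supported in a square of side L_j. For each j choose r_j > 0 with e² r_j ≤ L_j < e⁸ r_j if r_j < 1 (or e^{2r_j} ≤ L_j < e^{8r_j} if r_j ≥ 1), and set a_j(x₁,x₂,a) = (1/2) r_j⁻¹ 𝟙_{[e^{−r_j}, e^{r_j}]}(a) b_j(x₁,x₂). Then each a_j is an atom in G (supported in the Calderón–Zygmund set Q_j × [e^{−r_j}, e^{r_j}], with sup-norm ≤ ρ-measure inverse and vanishing ρ-integral), and the function f = Σ_j λ_j a_j satisfies ∫₀^∞ f(x₁,x₂,a) da/a = h(x₁,x₂) and ‖f‖_{H¹(G)} ≤ Σ_j |λ_j|. -/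

import Mathlib

open Set MeasureTheory Real
open scoped ENNReal NNReal

noncomputable section

abbrev G := ℝ × ℝ × ℝ

/-- The right Haar measure `dρ = a⁻¹ dx₁ dx₂ da` (supported on `a > 0`). -/
def ρG : Measure G :=
  (volume : Measure G).withDensity (fun p => ENNReal.ofReal (if 0 < p.2.2 then p.2.2⁻¹ else 0))

/-- A Calderón–Zygmund set in `G`. -/
def IsCZSet (R : Set G) : Prop :=
  ∃ b₁ b₂ a L r : ℝ, 0 < L ∧ 0 < r ∧ 0 < a ∧
    R = Icc (b₁ - L/2) (b₁ + L/2) ×ˢ Icc (b₂ - L/2) (b₂ + L/2) ×ˢ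
      Icc (a * Real.exp (-r)) (a * Real.exp r) ∧
    ((r < 1 ∧ Real.exp 2 * a * r ≤ L ∧ L < Real.exp 8 * a * r) ∨
     (1 ≤ r ∧ a * Real.exp (2*r) ≤ L ∧ L < a * Real.exp (8*r)))

lemma aux_exp_le {r : ℝ} (hr : 0 < r) : Real.exp (-r) ≤ Real.exp r :=
  Real.exp_le_exp.2 (by linarith)

lemma aux_Icc_pos {r a : ℝ} (ha : a ∈ Icc (Real.exp (-r)) (Real.exp r)) : 0 < a :=
  lt_of_lt_of_le (Real.exp_pos _) ha.1

lemma aux_int_inv {r : ℝ} (hr : 0 < r) :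
    ∫ a in Icc (Real.exp (-r)) (Real.exp r), a⁻¹ = 2 * r := by
  have hle := aux_exp_le hr
  rw [MeasureTheory.integral_Icc_eq_integral_Ioc,
    ← intervalIntegral.integral_of_le hle, integral_inv ?_]
  · rw [← Real.exp_sub]
    have : r - -r = 2 * r := by ring
    rw [this, Real.log_exp]
  · rw [Set.uIcc_of_le hle]
    exact fun h => absurd h.1 (not_le.2 (Real.exp_pos _))

lemma aux_intOn_inv {r : ℝ} (hr : 0 < r) :
    IntegrableOn (fun a : ℝ => a⁻¹) (Icc (Real.exp (-r)) (Real.exp r)) := by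
  apply ContinuousOn.integrableOn_compact isCompact_Icc
  exact ContinuousOn.inv₀ continuousOn_id
    (fun x hx => ne_of_gt (aux_Icc_pos hx))

lemma aux_lint_inv {r : ℝ} (hr : 0 < r) :
    ∫⁻ a in Icc (Real.exp (-r)) (Real.exp r), ENNReal.ofReal a⁻¹ = ENNReal.ofReal (2 * r) := by
  rw [← ofReal_integral_eq_lintegral_ofReal (aux_intOn_inv hr) ?_, aux_int_inv hr]
  filter_upwards [ae_restrict_mem measurableSet_Icc] with a ha
  exact inv_nonneg.2 (aux_Icc_pos ha).le

lemma aux_wmeas : Measurable (fun a : ℝ => ENNReal.ofReal (if 0 < a then a⁻¹ else 0)) := by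
  apply Measurable.ennreal_ofReal
  exact Measurable.ite measurableSet_Ioi measurable_inv measurable_const

lemma rhoG_box (A B : Set ℝ) (hA : MeasurableSet A) (hB : MeasurableSet B)
    {r : ℝ} (hr : 0 < r) :
    ρG (A ×ˢ B ×ˢ Icc (Real.exp (-r)) (Real.exp r)) =
      volume A * volume B * ENNReal.ofReal (2 * r) := by
  set C := Icc (Real.exp (-r)) (Real.exp r) with hC
  have hCm : MeasurableSet C := measurableSet_Icc
  have hmeas : MeasurableSet (A ×ˢ B ×ˢ C) := hA.prod (hB.prod hCm)
  rw [ρG, withDensity_apply _ hmeas]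
  rw [Measure.volume_eq_prod, Measure.volume_eq_prod, ← Measure.prod_restrict,
    ← Measure.prod_restrict]
  have hm2 : AEMeasurable (fun q : ℝ × ℝ => ENNReal.ofReal (if 0 < q.2 then q.2⁻¹ else 0))
      (((volume : Measure ℝ).restrict B).prod ((volume : Measure ℝ).restrict C)) :=
    (aux_wmeas.comp measurable_snd).aemeasurable
  have hm3 : AEMeasurable (fun p : G => ENNReal.ofReal (if 0 < p.2.2 then p.2.2⁻¹ else 0))
      (((volume : Measure ℝ).restrict A).prod
        (((volume : Measure ℝ).restrict B).prod ((volume : Measure ℝ).restrict C))) :=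
    (aux_wmeas.comp (measurable_snd.comp measurable_snd)).aemeasurable
  have h1 := MeasureTheory.lintegral_prod_mul (μ := (volume : Measure ℝ).restrict A)
    (ν := ((volume : Measure ℝ).restrict B).prod ((volume : Measure ℝ).restrict C))
    (f := fun _ : ℝ => (1:ℝ≥0∞))
    (g := fun q : ℝ × ℝ => ENNReal.ofReal (if 0 < q.2 then q.2⁻¹ else 0))
    aemeasurable_const hm2
  have h2 := MeasureTheory.lintegral_prod_mul (μ := (volume : Measure ℝ).restrict B)
    (ν := (volume : Measure ℝ).restrict C)
    (f := fun _ : ℝ => (1:ℝ≥0∞))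
    (g := fun a : ℝ => ENNReal.ofReal (if 0 < a then a⁻¹ else 0))
    aemeasurable_const aux_wmeas.aemeasurable
  simp only [one_mul] at h1 h2
  rw [h1, h2, lintegral_one, lintegral_one, Measure.restrict_apply_univ,
    Measure.restrict_apply_univ]
  have h3 : ∫⁻ a in C, ENNReal.ofReal (if 0 < a then a⁻¹ else 0) ∂volume
      = ENNReal.ofReal (2 * r) := by
    rw [← aux_lint_inv hr]
    apply setLIntegral_congr_fun hCm
    intro a ha
    beta_reduce
    rw [if_pos (aux_Icc_pos ha)]
  rw [h3, mul_assoc]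

lemma aux_vol2 : (volume : Measure (ℝ × ℝ)) = (volume : Measure ℝ).prod (volume : Measure ℝ) :=
  Measure.volume_eq_prod ℝ ℝ

lemma aux_vol3 : (volume : Measure G) =
    (volume : Measure ℝ).prod ((volume : Measure ℝ).prod (volume : Measure ℝ)) := by
  rw [Measure.volume_eq_prod, Measure.volume_eq_prod]

lemma aux_assoc_mp : MeasurePreserving
    (⇑(MeasurableEquiv.prodAssoc : (ℝ × ℝ) × ℝ ≃ᵐ ℝ × ℝ × ℝ))
    (((volume : Measure ℝ).prod (volume : Measure ℝ)).prod (volume : Measure ℝ))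
    (volume : Measure G) := by
  rw [aux_vol3]
  exact measurePreserving_prodAssoc _ _ _

lemma aux_b_meas (b : (ℝ × ℝ) → ℝ) (hb : AEStronglyMeasurable b (volume : Measure (ℝ × ℝ))) :
    AEStronglyMeasurable (fun p : G => b (p.1, p.2.1)) (volume : Measure G) := by
  have h1 : AEStronglyMeasurable (fun q : (ℝ × ℝ) × ℝ => b q.1)
      ((volume : Measure (ℝ × ℝ)).prod (volume : Measure ℝ)) :=
    hb.comp_quasiMeasurePreserving Measure.quasiMeasurePreserving_fst
  rw [aux_vol2] at h1
  have h3 := h1.comp_quasiMeasurePreserving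
    (MeasurePreserving.symm MeasurableEquiv.prodAssoc aux_assoc_mp).quasiMeasurePreserving
  exact h3

lemma aux_zero (bj : (ℝ × ℝ) → ℝ) (hbzero : ∫ x, bj x ∂(volume : Measure (ℝ × ℝ)) = 0)
    (k : ℝ → ℝ) : ∫ p : G, bj (p.1, p.2.1) * k p.2.2 ∂(volume : Measure G) = 0 := by
  rw [← MeasurePreserving.integral_comp' aux_assoc_mp
    (fun p : G => bj (p.1, p.2.1) * k p.2.2)]
  have heq : (fun x : (ℝ × ℝ) × ℝ => bj ((MeasurableEquiv.prodAssoc x).1,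
      (MeasurableEquiv.prodAssoc x).2.1) * k (MeasurableEquiv.prodAssoc x).2.2) =
      fun x : (ℝ × ℝ) × ℝ => bj x.1 * k x.2 := rfl
  rw [show (fun x : (ℝ × ℝ) × ℝ => bj ((MeasurableEquiv.prodAssoc x).1,
      (MeasurableEquiv.prodAssoc x).2.1) * k (MeasurableEquiv.prodAssoc x).2.2) =
      fun x : (ℝ × ℝ) × ℝ => bj x.1 * k x.2 from rfl]
  rw [MeasureTheory.integral_prod_mul bj k, ← aux_vol2, hbzero, zero_mul]

lemma aux_w0_nonneg (a : ℝ) : 0 ≤ (if 0 < a then a⁻¹ else 0 : ℝ) := by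
  split_ifs with hpos
  · exact inv_nonneg.2 hpos.le
  · exact le_rfl

lemma aux_w0_meas : Measurable (fun a : ℝ => (if 0 < a then a⁻¹ else 0 : ℝ)) :=
  Measurable.ite measurableSet_Ioi measurable_inv measurable_const


def boxR (cj : ℝ × ℝ) (Lj rj : ℝ) : Set G :=
  Icc (cj.1 - Lj / 2) (cj.1 + Lj / 2) ×ˢ Icc (cj.2 - Lj / 2) (cj.2 + Lj / 2) ×ˢ
    Icc (Real.exp (-rj)) (Real.exp rj)

/-- An atom in `G`: supported in a Calderón–Zygmund set `R`, bounded by `ρ(R)⁻¹`,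
integrable with vanishing `ρ`-integral. -/
def IsAtomG (k : G → ℝ) : Prop :=
  ∃ R : Set G, IsCZSet R ∧ (∀ p ∉ R, k p = 0) ∧ (∀ p, |k p| ≤ ((ρG R).toReal)⁻¹) ∧
    Integrable k ρG ∧ ∫ p, k p ∂ρG = 0

/-- The atomic `H¹(G)` norm: the infimum of `Σ|λ_j|` over atomic decompositions. -/
def H1normG (f : G → ℝ) : ℝ :=
  sInf {s : ℝ | ∃ (lam : ℕ → ℝ) (at_ : ℕ → G → ℝ), (∀ j, IsAtomG (at_ j)) ∧
    (∀ p, HasSum (fun j => lam j * at_ j p) (f p)) ∧ HasSum (fun j => |lam j|) s}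

/-- Lemma 8.2: given an atomic decomposition `h = Σ λ_j b_j` in `H¹(ℝ²)` (each `b_j`
an atom supported in a square `Q_j` of side `L_j`), numbers `r_j > 0` related to `L_j` by the
Calderón–Zygmund conditions, and `a_j(x₁,x₂,a) = (1/2) r_j⁻¹ 𝟙_{[e^{-r_j},e^{r_j}]}(a) b_j(x₁,x₂)`,
each `a_j` is an atom in `G`, the function `f = Σ λ_j a_j` satisfies
`∫₀^∞ f(x₁,x₂,a) da/a = h(x₁,x₂)`, and `‖f‖_{H¹(G)} ≤ Σ_j |λ_j|`. -/
theorem lift_H1_R2_to_G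
    (lam : ℕ → ℝ) (b : ℕ → (ℝ × ℝ) → ℝ) (c : ℕ → ℝ × ℝ) (L r : ℕ → ℝ)
    (hL : ∀ j, 0 < L j)
    (hsupp : ∀ j, ∀ x : ℝ × ℝ,
      x ∉ Icc ((c j).1 - L j / 2) ((c j).1 + L j / 2) ×ˢ
            Icc ((c j).2 - L j / 2) ((c j).2 + L j / 2) → b j x = 0)
    (hbdd : ∀ j x, |b j x| ≤ ((L j) ^ 2)⁻¹)
    (hbint : ∀ j, Integrable (b j) (volume : Measure (ℝ × ℝ)))
    (hbzero : ∀ j, ∫ x, b j x ∂(volume : Measure (ℝ × ℝ)) = 0)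
    (hr : ∀ j, 0 < r j ∧
      ((r j < 1 ∧ Real.exp 2 * r j ≤ L j ∧ L j < Real.exp 8 * r j) ∨
       (1 ≤ r j ∧ Real.exp (2 * r j) ≤ L j ∧ L j < Real.exp (8 * r j))))
    (hlam : Summable fun j => |lam j|)
    (h : ℝ × ℝ → ℝ) (hh : ∀ x, HasSum (fun j => lam j * b j x) (h x))
    (aG : ℕ → G → ℝ)
    (haG : ∀ j p, aG j p = (1/2) * (r j)⁻¹ *
      (Icc (Real.exp (-(r j))) (Real.exp (r j))).indicator (fun _ => (1:ℝ)) p.2.2 *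
        b j (p.1, p.2.1))
    (f : G → ℝ) (hf : ∀ p, HasSum (fun j => lam j * aG j p) (f p)) :
    (∀ j, IsAtomG (aG j)) ∧
    (∀ x₁ x₂ : ℝ, ∫ a in Ioi (0 : ℝ), f (x₁, x₂, a) / a = h (x₁, x₂)) ∧
    H1normG f ≤ ∑' j, |lam j| := by
  have hrpos : ∀ j, 0 < r j := fun j => (hr j).1
  have hRmeas : ∀ j, MeasurableSet (boxR (c j) (L j) (r j)) := fun j => by
    simp only [boxR]
    exact measurableSet_Icc.prod (measurableSet_Icc.prod measurableSet_Icc)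
  have hρR : ∀ j, ρG (boxR (c j) (L j) (r j)) =
      ENNReal.ofReal (L j) * ENNReal.ofReal (L j) * ENNReal.ofReal (2 * r j) := by
    intro j
    simp only [boxR]
    rw [rhoG_box _ _ measurableSet_Icc measurableSet_Icc (hrpos j), Real.volume_Icc,
      Real.volume_Icc]
    have e1 : (c j).1 + L j / 2 - ((c j).1 - L j / 2) = L j := by ring
    have e2 : (c j).2 + L j / 2 - ((c j).2 - L j / 2) = L j := by ring
    rw [e1, e2]
  have htoReal : ∀ j, ((ρG (boxR (c j) (L j) (r j))).toReal) = L j * L j * (2 * r j) := by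
    intro j
    rw [hρR j, ENNReal.toReal_mul, ENNReal.toReal_mul, ENNReal.toReal_ofReal (hL j).le,
      ENNReal.toReal_ofReal (show (0:ℝ) ≤ 2 * r j by linarith [hrpos j])]
  have hρfin : ∀ j, ρG (boxR (c j) (L j) (r j)) ≠ ⊤ := by
    intro j; rw [hρR j]
    exact ENNReal.mul_ne_top (ENNReal.mul_ne_top ENNReal.ofReal_ne_top ENNReal.ofReal_ne_top)
      ENNReal.ofReal_ne_top
  have hsupp' : ∀ j, ∀ p : G, p ∉ boxR (c j) (L j) (r j) → aG j p = 0 := by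
    intro j p hp
    rw [haG j p]
    by_cases hm : p.2.2 ∈ Icc (Real.exp (-(r j))) (Real.exp (r j))
    · have hx : (p.1, p.2.1) ∉ Icc ((c j).1 - L j / 2) ((c j).1 + L j / 2) ×ˢ
          Icc ((c j).2 - L j / 2) ((c j).2 + L j / 2) := by
        intro hx
        exact hp ⟨hx.1, hx.2, hm⟩
      rw [hsupp j _ hx, mul_zero]
    · rw [Set.indicator_of_notMem hm, mul_zero, zero_mul]
  have hboundval : ∀ j, ((ρG (boxR (c j) (L j) (r j))).toReal)⁻¹ =
      1/2 * (r j)⁻¹ * ((L j) ^ 2)⁻¹ := by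
    intro j
    rw [htoReal j]
    have h1 : L j ≠ 0 := (hL j).ne'
    have h2 : r j ≠ 0 := (hrpos j).ne'
    field_simp
  have hbound : ∀ j, ∀ p : G, |aG j p| ≤ ((ρG (boxR (c j) (L j) (r j))).toReal)⁻¹ := by
    intro j p
    rw [hboundval j, haG j p]
    by_cases hm : p.2.2 ∈ Icc (Real.exp (-(r j))) (Real.exp (r j))
    · rw [Set.indicator_of_mem hm, mul_one, abs_mul]
      have hnn : (0:ℝ) ≤ 1/2 * (r j)⁻¹ := mul_nonneg (by norm_num) (inv_nonneg.2 (hrpos j).le)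
      rw [abs_of_nonneg hnn]
      exact mul_le_mul_of_nonneg_left (hbdd j _) hnn
    · rw [Set.indicator_of_notMem hm, mul_zero, zero_mul, abs_zero]
      exact mul_nonneg (mul_nonneg (by norm_num) (inv_nonneg.2 (hrpos j).le))
        (inv_nonneg.2 (sq_nonneg _))
  have hmeasaG : ∀ j, AEStronglyMeasurable (aG j) ρG := by
    intro j
    have hac : ρG ≪ (volume : Measure G) := withDensity_absolutelyContinuous _ _
    have h0 : AEStronglyMeasurable (aG j) (volume : Measure G) := by
      have heq : aG j = fun p : G => ((1/2) * (r j)⁻¹ *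
          (Icc (Real.exp (-(r j))) (Real.exp (r j))).indicator (fun _ => (1:ℝ)) p.2.2) *
          b j (p.1, p.2.1) := by
        funext p; rw [haG j p]
      rw [heq]
      apply AEStronglyMeasurable.mul _ (aux_b_meas (b j) (hbint j).1)
      apply Measurable.aestronglyMeasurable
      exact measurable_const.mul ((measurable_const.indicator measurableSet_Icc).comp
        (measurable_snd.comp measurable_snd))
    exact h0.mono_ac hac
  have hintaG : ∀ j, Integrable (aG j) ρG := by
    intro j
    refine ⟨hmeasaG j, ?_⟩
    have hb : ∀ p : G, (‖aG j p‖₊ : ℝ≥0∞) ≤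
        (boxR (c j) (L j) (r j)).indicator
          (fun _ => ENNReal.ofReal (((ρG (boxR (c j) (L j) (r j))).toReal)⁻¹)) p := by
      intro p
      by_cases hp : p ∈ boxR (c j) (L j) (r j)
      · rw [Set.indicator_of_mem hp, ← enorm_eq_nnnorm, ← ofReal_norm]
        exact ENNReal.ofReal_le_ofReal (by rw [Real.norm_eq_abs]; exact hbound j p)
      · rw [Set.indicator_of_notMem hp, hsupp' j p hp]
        simp
    show (∫⁻ p, (‖aG j p‖₊ : ℝ≥0∞) ∂ρG) < ⊤
    calc ∫⁻ p, (‖aG j p‖₊ : ℝ≥0∞) ∂ρG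
        ≤ ∫⁻ p, (boxR (c j) (L j) (r j)).indicator
            (fun _ => ENNReal.ofReal (((ρG (boxR (c j) (L j) (r j))).toReal)⁻¹)) p ∂ρG :=
          lintegral_mono hb
      _ = ENNReal.ofReal (((ρG (boxR (c j) (L j) (r j))).toReal)⁻¹) *
            ρG (boxR (c j) (L j) (r j)) :=
          lintegral_indicator_const (hRmeas j) _
      _ < ⊤ := ENNReal.mul_lt_top ENNReal.ofReal_lt_top (hρfin j).lt_top
  have hzero : ∀ j, ∫ p, aG j p ∂ρG = 0 := by
    intro j
    have hwm : Measurable (fun p : G => (if 0 < p.2.2 then p.2.2⁻¹ else 0 : ℝ).toNNReal) :=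
      measurable_real_toNNReal.comp (aux_w0_meas.comp (measurable_snd.comp measurable_snd))
    have hrew : ρG = (volume : Measure G).withDensity
        (fun p : G => ((if 0 < p.2.2 then p.2.2⁻¹ else 0 : ℝ).toNNReal : ℝ≥0∞)) := rfl
    rw [hrew, integral_withDensity_eq_integral_smul hwm (aG j)]
    have heq : (fun p : G => ((if 0 < p.2.2 then p.2.2⁻¹ else 0 : ℝ).toNNReal) • aG j p) =
        fun p : G => b j (p.1, p.2.1) * (fun a : ℝ => (if 0 < a then a⁻¹ else 0) *
          ((1/2) * (r j)⁻¹ *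
            (Icc (Real.exp (-(r j))) (Real.exp (r j))).indicator (fun _ => (1:ℝ)) a)) p.2.2 := by
      funext p
      rw [haG j p, NNReal.smul_def, Real.coe_toNNReal _ (aux_w0_nonneg _), smul_eq_mul]
      ring
    rw [heq]
    exact aux_zero (b j) (hbzero j) (fun a : ℝ => (if 0 < a then a⁻¹ else 0) *
      ((1/2) * (r j)⁻¹ *
        (Icc (Real.exp (-(r j))) (Real.exp (r j))).indicator (fun _ => (1:ℝ)) a))
  have hatom : ∀ j, IsAtomG (aG j) := by
    intro j
    refine ⟨boxR (c j) (L j) (r j), ?_, hsupp' j, hbound j, hintaG j, hzero j⟩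
    refine ⟨(c j).1, (c j).2, 1, L j, r j, hL j, hrpos j, one_pos, ?_, ?_⟩
    · simp [boxR]
    · simpa using (hr j).2
  have key2 : ∀ x₁ x₂ : ℝ, ∫ a in Ioi (0 : ℝ), f (x₁, x₂, a) / a = h (x₁, x₂) := by
    intro x₁ x₂
    have hgeq : ∀ j, (fun a : ℝ => lam j * aG j (x₁, x₂, a) / a) =
        fun a : ℝ => (lam j * ((1/2) * (r j)⁻¹ * b j (x₁, x₂))) *
          (Icc (Real.exp (-(r j))) (Real.exp (r j))).indicator (fun t : ℝ => t⁻¹) a := by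
      intro j; funext a
      have hp : aG j (x₁, x₂, a) = (1/2) * (r j)⁻¹ *
          (Icc (Real.exp (-(r j))) (Real.exp (r j))).indicator (fun _ => (1:ℝ)) a *
          b j (x₁, x₂) := haG j (x₁, x₂, a)
      rw [hp]
      by_cases hm : a ∈ Icc (Real.exp (-(r j))) (Real.exp (r j))
      · rw [Set.indicator_of_mem hm, Set.indicator_of_mem hm, mul_one, div_eq_mul_inv]
      · rw [Set.indicator_of_notMem hm, Set.indicator_of_notMem hm]
        simp
    have hgint : ∀ j, Integrable (fun a : ℝ => lam j * aG j (x₁, x₂, a) / a)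
        ((volume : Measure ℝ).restrict (Ioi 0)) := by
      intro j
      rw [hgeq j]
      exact (((integrable_indicator_iff measurableSet_Icc).2
        (aux_intOn_inv (hrpos j))).restrict).const_mul _
    have hinter : ∀ j, Ioi (0:ℝ) ∩ Icc (Real.exp (-(r j))) (Real.exp (r j)) =
        Icc (Real.exp (-(r j))) (Real.exp (r j)) :=
      fun j => inter_eq_self_of_subset_right (fun a ha => aux_Icc_pos ha)
    have hgval : ∀ j, ∫ a in Ioi (0:ℝ), lam j * aG j (x₁, x₂, a) / a
        = lam j * b j (x₁, x₂) := by
      intro j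
      rw [hgeq j, MeasureTheory.integral_const_mul, setIntegral_indicator measurableSet_Icc,
        hinter j, aux_int_inv (hrpos j)]
      have h2 : r j ≠ 0 := (hrpos j).ne'
      field_simp
    have habs : ∀ j, ∫ a in Ioi (0:ℝ), ‖lam j * aG j (x₁, x₂, a) / a‖
        = |lam j * b j (x₁, x₂)| := by
      intro j
      have hn : (fun a : ℝ => ‖lam j * aG j (x₁, x₂, a) / a‖) =
          fun a : ℝ => |lam j * ((1/2) * (r j)⁻¹ * b j (x₁, x₂))| *
            (Icc (Real.exp (-(r j))) (Real.exp (r j))).indicator (fun t : ℝ => t⁻¹) a := by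
        funext a
        rw [Real.norm_eq_abs, congrFun (hgeq j) a]
        by_cases hm : a ∈ Icc (Real.exp (-(r j))) (Real.exp (r j))
        · rw [Set.indicator_of_mem hm, abs_mul,
            abs_of_nonneg (inv_nonneg.2 (aux_Icc_pos hm).le)]
        · rw [Set.indicator_of_notMem hm]
          simp
      rw [hn, MeasureTheory.integral_const_mul, setIntegral_indicator measurableSet_Icc,
        hinter j, aux_int_inv (hrpos j)]
      rw [show lam j * ((1/2) * (r j)⁻¹ * b j (x₁, x₂)) =
          (lam j * b j (x₁, x₂)) * ((1/2) * (r j)⁻¹) from by ring, abs_mul,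
        abs_of_nonneg (mul_nonneg (by norm_num) (inv_nonneg.2 (hrpos j).le))]
      have h2 : r j ≠ 0 := (hrpos j).ne'
      field_simp
    have hsum0 : Summable (fun j => |lam j * b j (x₁, x₂)|) :=
      summable_abs_iff.2 (hh (x₁, x₂)).summable
    have hne : (∑' j, ∫⁻ a in Ioi (0:ℝ), (‖lam j * aG j (x₁, x₂, a) / a‖₊ : ℝ≥0∞)) ≠ ⊤ := by
      have heach : ∀ j, ∫⁻ a in Ioi (0:ℝ), (‖lam j * aG j (x₁, x₂, a) / a‖₊ : ℝ≥0∞) =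
          ENNReal.ofReal (|lam j * b j (x₁, x₂)|) := by
        intro j
        simp_rw [← enorm_eq_nnnorm]
        rw [← ofReal_integral_norm_eq_lintegral_enorm (hgint j), habs j]
      rw [tsum_congr heach, ← ENNReal.ofReal_tsum_of_nonneg (fun j => abs_nonneg _) hsum0]
      exact ENNReal.ofReal_ne_top
    calc ∫ a in Ioi (0:ℝ), f (x₁, x₂, a) / a
        = ∫ a in Ioi (0:ℝ), ∑' j, lam j * aG j (x₁, x₂, a) / a := by
          apply integral_congr_ae
          filter_upwards with a
          exact ((hf (x₁, x₂, a)).div_const a).tsum_eq.symm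
      _ = ∑' j, ∫ a in Ioi (0:ℝ), lam j * aG j (x₁, x₂, a) / a :=
          integral_tsum (fun j => (hgint j).1) hne
      _ = ∑' j, lam j * b j (x₁, x₂) := tsum_congr hgval
      _ = h (x₁, x₂) := (hh (x₁, x₂)).tsum_eq
  refine ⟨hatom, key2, ?_⟩
  have hmem : (∑' j, |lam j|) ∈ {s : ℝ | ∃ (lam' : ℕ → ℝ) (at_ : ℕ → G → ℝ),
      (∀ j, IsAtomG (at_ j)) ∧ (∀ p, HasSum (fun j => lam' j * at_ j p) (f p)) ∧
      HasSum (fun j => |lam' j|) s} := ⟨lam, aG, hatom, hf, hlam.hasSum⟩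
  have hbdd2 : BddBelow {s : ℝ | ∃ (lam' : ℕ → ℝ) (at_ : ℕ → G → ℝ),
      (∀ j, IsAtomG (at_ j)) ∧ (∀ p, HasSum (fun j => lam' j * at_ j p) (f p)) ∧
      HasSum (fun j => |lam' j|) s} := by
    refine ⟨0, fun s hs => ?_⟩
    obtain ⟨lam', at', _h1, _h2, h3⟩ := hs
    rw [← h3.tsum_eq]
    exact tsum_nonneg (fun j => abs_nonneg _)
  exact csInf_le hbdd2 hmem
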